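/- For the tangential projector P and the stress tensor σ = N + n ⊗ S on a surface, with tangential N = N^{αβ} g_α⊗g_β and tangential vector S = S^α g_α, the scalar-cross product satisfies P ⨯ σᵀ = [Nᵀ]_× + S × n, where [T]_× = T_{ij} e^i × e^j. -/
import Mathlib


open Matrix MeasureTheory
noncomputable section

abbrev V3 := Fin 3 → ℝ
abbrev V2 := Fin 2 → ℝ
abbrev M3 := Matrix (Fin 3) (Fin 3) ℝ

/-- ambient partial derivative of a scalar field on ℝ³ -/
def pd (i : Fin 3) (f : V3 → ℝ) (x : V3) : ℝ := fderiv ℝ f x (Pi.single i 1)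
/-- ambient gradient ∇f -/
def grad (f : V3 → ℝ) (x : V3) : V3 := fun i => pd i f x
/-- ambient Jacobian (∇u)_{ij} = ∂u_i/∂x_j -/
def jac (u : V3 → V3) (x : V3) : M3 := fun i j => pd j (fun y => u y i) x
/-- ambient Hessian ∇∇f -/
def hess (f : V3 → ℝ) (x : V3) : M3 := fun i j => pd j (fun y => pd i f y) x
/-- dyadic (outer) product a ⊗ b -/
def outer (a b : V3) : M3 := vecMulVec a b
/-- Euclidean norm on ℝ³ -/
def norm3 (v : V3) : ℝ := Real.sqrt (v ⬝ᵥ v)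
/-- cross product on ℝ³ -/
def cross3 (a b : V3) : V3 := crossProduct a b
/-- standard Cartesian basis -/
def e3 (i : Fin 3) : V3 := Pi.single i 1

/-- parametric partial derivative of a scalar field on the parameter domain -/
def pd2 (α : Fin 2) (f : V2 → ℝ) (θ : V2) : ℝ := fderiv ℝ f θ (Pi.single α 1)
/-- parametric partial derivative of a vector field -/
def pdv2 (α : Fin 2) (f : V2 → V3) (θ : V2) : V3 := fun i => pd2 α (fun t => f t i) θ
/-- parametric partial derivative of a matrix (second-order tensor) field -/
def pdm2 (α : Fin 2) (T : V2 → M3) (θ : V2) : M3 := fun i j => pd2 α (fun t => T t i j) θ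

/-- covariant basis a_α = ∂r/∂θ^α -/
def cov (r : V2 → V3) (α : Fin 2) (θ : V2) : V3 := pdv2 α r θ
/-- first fundamental form g_{αβ} = a_α · a_β -/
def fff (r : V2 → V3) (θ : V2) : Matrix (Fin 2) (Fin 2) ℝ := fun α β => cov r α θ ⬝ᵥ cov r β θ
/-- contravariant basis a^α = g^{αβ} a_β -/
def contrav (r : V2 → V3) (α : Fin 2) (θ : V2) : V3 := ∑ β, (fff r θ)⁻¹ α β • cov r β θ
/-- unit normal n = (a_1 × a_2)/‖a_1 × a_2‖ -/
def nhat (r : V2 → V3) (θ : V2) : V3 :=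
  (norm3 (cross3 (cov r 0 θ) (cov r 1 θ)))⁻¹ • cross3 (cov r 0 θ) (cov r 1 θ)
/-- Christoffel symbols Γ^γ_{αβ} = a^γ · a_{α,β} -/
def christ (r : V2 → V3) (γ α β : Fin 2) (θ : V2) : ℝ := contrav r γ θ ⬝ᵥ pdv2 β (cov r α) θ
/-- second fundamental form h_{αβ} = −a_α · n_{,β} -/
def sff (r : V2 → V3) (α β : Fin 2) (θ : V2) : ℝ := -(cov r α θ ⬝ᵥ pdv2 β (nhat r) θ)
/-- mean curvature H = h^α_α = g^{αγ} h_{γα} -/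
def meanCurv (r : V2 → V3) (θ : V2) : ℝ := ∑ α, ∑ γ, (fff r θ)⁻¹ α γ * sff r γ α θ

/-- vector invariant [T]_× = T_{ij} e^i × e^j -/
def vecInv (T : M3) : V3 := ∑ i, ∑ j, T i j • cross3 (e3 i) (e3 j)
/-- scalar-cross product V ⨯ T = V_{ij} T_{lk} (e^j·e^l)(e^i × e^k) -/
def scalarCross (A B : M3) : V3 :=
  ∑ i, ∑ j, ∑ l, ∑ k, (A i j * B l k * (e3 j ⬝ᵥ e3 l)) • cross3 (e3 i) (e3 k)
/-- cross product of a vector and a second-order tensor,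
    v × T = v_i T_{lk} (e^i × e^l) ⊗ e^k -/
def crossT (v : V3) (T : M3) : M3 :=
  ∑ i, ∑ l, ∑ k, (v i * T l k) • outer (cross3 (e3 i) (e3 l)) (e3 k)

lemma e3_dot (j l : Fin 3) : e3 j ⬝ᵥ e3 l = if j = l then (1:ℝ) else 0 := by
  fin_cases j <;> fin_cases l <;> simp [e3, dotProduct, Fin.sum_univ_three, Pi.single_apply]

lemma scalarCross_eq_vecInv_mul (A B : M3) : scalarCross A B = vecInv (A * B) := by
  unfold scalarCross vecInv
  simp only [e3_dot, Matrix.mul_apply, Finset.sum_smul]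
  refine Finset.sum_congr rfl fun i _ => ?_
  have h : ∀ j : Fin 3,
      (∑ l, ∑ k, (A i j * B l k * (if j = l then (1:ℝ) else 0)) • cross3 (e3 i) (e3 k))
      = ∑ k, (A i j * B j k) • cross3 (e3 i) (e3 k) := by
    intro j
    rw [Finset.sum_comm]
    refine Finset.sum_congr rfl fun k _ => ?_
    rw [Finset.sum_eq_single j]
    · simp
    · intro l _ hlj; simp [Ne.symm hlj]
    · simp
  simp only [h]
  exact Finset.sum_comm

lemma vecInv_add (A B : M3) : vecInv (A + B) = vecInv A + vecInv B := by
  unfold vecInv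
  simp [Matrix.add_apply, add_smul, Finset.sum_add_distrib]

lemma vecInv_outer (a b : V3) : vecInv (outer a b) = cross3 a b := by
  unfold vecInv outer cross3
  have ha : a = ∑ i, a i • e3 i := by funext i; simp [e3, Pi.single_apply]
  have hb : b = ∑ i, b i • e3 i := by funext i; simp [e3, Pi.single_apply]
  conv_rhs => rw [ha, hb]
  simp only [map_sum, LinearMap.map_smul, LinearMap.sum_apply, LinearMap.smul_apply,
    vecMulVec_apply, cross3]
  rw [Finset.sum_comm]
  simp [← smul_smul]

lemma outer_mulVec (a b v : V3) : (outer a b).mulVec v = (b ⬝ᵥ v) • a := by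
  funext i
  simp [outer, Matrix.mulVec, dotProduct, vecMulVec_apply, Finset.sum_mul,
    Finset.mul_sum, mul_comm, mul_assoc, mul_left_comm]

lemma mul_outer (M : M3) (a b : V3) : M * outer a b = outer (M.mulVec a) b := by
  ext i j
  simp [outer, Matrix.mul_apply, vecMulVec_apply, Matrix.mulVec, dotProduct,
    Finset.sum_mul, mul_assoc]

lemma outer_transpose (a b : V3) : (outer a b)ᵀ = outer b a := by
  ext i j
  simp [outer, vecMulVec_apply, mul_comm]

lemma sum_mulVec3 {ι : Type*} (s : Finset ι) (f : ι → M3) (v : V3) :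
    (∑ x ∈ s, f x).mulVec v = ∑ x ∈ s, (f x).mulVec v := by
  funext i
  simp only [Matrix.mulVec, dotProduct, Matrix.sum_apply, Finset.sum_apply, Finset.sum_mul]
  exact Finset.sum_comm

lemma mulVec_sum3 {ι : Type*} (s : Finset ι) (M : M3) (v : ι → V3) :
    M.mulVec (∑ x ∈ s, v x) = ∑ x ∈ s, M.mulVec (v x) := by
  funext i
  simp only [Matrix.mulVec, dotProduct, Finset.sum_apply, Finset.mul_sum]
  exact Finset.sum_comm

/-- for σ = N + n ⊗ S with tangential N = N^{αβ} g_α⊗g_β and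
tangential S = S^α g_α, one has P ⨯ σᵀ = [Nᵀ]_× + S × n. -/
theorem projector_scalarCross_stress
    (g gU : Fin 2 → V3)
    (hdual : ∀ α β, gU α ⬝ᵥ g β = if α = β then (1 : ℝ) else 0)
    (n : V3)
    (Nc : Fin 2 → Fin 2 → ℝ) (Sc : Fin 2 → ℝ)
    (N : M3) (hN : N = ∑ α, ∑ β, Nc α β • outer (g α) (g β))
    (S : V3) (hS : S = ∑ α, Sc α • g α)
    (P : M3) (hP : P = ∑ α, outer (g α) (gU α))
    (σ : M3) (hσ : σ = N + outer n S) :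
    scalarCross P σᵀ = vecInv Nᵀ + cross3 S n := by
  have hPg : ∀ β, P.mulVec (g β) = g β := by
    intro β
    rw [hP]
    rw [sum_mulVec3]
    simp only [outer_mulVec, hdual]
    simp
  have hPS : P.mulVec S = S := by
    rw [hS, mulVec_sum3]
    simp only [Matrix.mulVec_smul, hPg]
  have key : P * σᵀ = Nᵀ + outer S n := by
    rw [hσ, Matrix.transpose_add, outer_transpose, Matrix.mul_add, mul_outer, hPS, hN]
    congr 1
    rw [Matrix.transpose_sum]
    simp only [Matrix.transpose_sum, Matrix.transpose_smul, outer_transpose,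
      Matrix.mul_sum, Matrix.mul_smul, mul_outer, hPg]
  rw [scalarCross_eq_vecInv_mul, key, vecInv_add, vecInv_outer]
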